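/- (Dual-space Fejér monotonicity, exact case) Let T: X ⇉ X* be monotone, φ strictly convex smooth super-coercive with ∇φ(0)=0, and let sequences satisfy vᵏ ∈ T(x^{k+1}) and x^{k+1} = xᵏ − ∇φ*(vᵏ) for all k. Then for each k: D_{φ*}(v^{k+1}, 0) ≤ D_{φ*}(vᵏ, 0) − D_{φ*}(vᵏ, v^{k+1}), where D_{φ*}(u,v) = φ*(u) − φ*(v) − ⟨∇φ*(v), u−v⟩. -/
import Mathlib


open scoped RealInnerProductSpace

/-- Dual-space Fejér monotonicity (exact case) for the anisotropic proximal point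
iteration `vᵏ ∈ T(x^{k+1})`, `x^{k+1} = xᵏ − ∇φ*(vᵏ)`. -/
theorem stmt11 {X : Type*} [NormedAddCommGroup X] [InnerProductSpace ℝ X] [CompleteSpace X]
    (φ φs : X → ℝ) (gφ gφs : X → X)
    (hconv : StrictConvexOn ℝ Set.univ φ)
    (hgrad : ∀ x, HasGradientAt φ (gφ x) x)
    (hgrads : ∀ x, HasGradientAt φs (gφs x) x)
    (hsc : Filter.Tendsto (fun x => φ x / ‖x‖) (Filter.cocompact X) Filter.atTop)
    (hinv1 : Function.LeftInverse gφs gφ)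
    (hinv2 : Function.RightInverse gφs gφ)
    (h0 : gφ 0 = 0)
    (T : X → Set X)
    (hmono : ∀ a b u w : X, u ∈ T a → w ∈ T b → 0 ≤ ⟪u - w, a - b⟫)
    (x v : ℕ → X)
    (hv : ∀ k, v k ∈ T (x (k + 1)))
    (hx : ∀ k, x (k + 1) = x k - gφs (v k)) :
    ∀ k,
      φs (v (k + 1)) - φs 0 - ⟪gφs 0, v (k + 1) - 0⟫ ≤
        (φs (v k) - φs 0 - ⟪gφs 0, v k - 0⟫) -
          (φs (v k) - φs (v (k + 1)) - ⟪gφs (v (k + 1)), v k - v (k + 1)⟫) := by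
  intro k
  have h1 : gφs 0 = 0 := by have := hinv1 0; rwa [h0] at this
  have h2 : gφs (v (k + 1)) = x (k + 1) - x (k + 1 + 1) := by
    rw [hx (k + 1)]; abel
  have h3 := hmono (x (k + 1)) (x (k + 1 + 1)) (v k) (v (k + 1)) (hv k) (hv (k + 1))
  rw [h2, real_inner_comm] at *
  simp only [h1, inner_zero_left, inner_zero_right]
  linarith
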